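/- Let p be an odd prime, ξ = exp(2πi/p), and let m be an integer coprime to p. For n with 1 ≤ n ≤ (p-1)/2 and any integer g, the sum Σ_{k=n}^{(p-1)/2} (ξ^{-mk} - ξ^{mk}) ξ^{gk²} C(k+n-1, k-n) is divisible by (ξ - 1)^{(p-1)/2 - n + 1} in Z[ξ]. -/

import Mathlib

open Complex Finset


set_option maxRecDepth 4000

lemma LW.sum_eval_zero {p : ℕ} [Fact p.Prime] (P : Polynomial (ZMod p))
    (hP : P.natDegree ≤ p - 2) : ∑ x : ZMod p, P.eval x = 0 := by
  have hp : p.Prime := Fact.out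
  have h2 : 2 ≤ p := hp.two_le
  calc ∑ x : ZMod p, P.eval x
      = ∑ x : ZMod p, ∑ j ∈ range (P.natDegree + 1), P.coeff j * x ^ j := by
        refine Finset.sum_congr rfl fun x _ => ?_
        exact Polynomial.eval_eq_sum_range x
    _ = ∑ j ∈ range (P.natDegree + 1), P.coeff j * ∑ x : ZMod p, x ^ j := by
        rw [Finset.sum_comm]
        exact Finset.sum_congr rfl fun j _ => (Finset.mul_sum _ _ _).symm
    _ = 0 := by
        refine Finset.sum_eq_zero fun j hj => ?_
        have hj' : j < p - 1 := by
          have := Finset.mem_range.1 hj; omega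
        have := FiniteField.sum_pow_lt_card_sub_one (ZMod p) j (by rwa [ZMod.card])
        rw [this, mul_zero]

lemma LW.choose_cast_eq (p : ℕ) (e j : ℕ) :
    (e.choose j : ZMod p) * (Nat.factorial j : ZMod p) =
      ∏ i ∈ range j, ((e : ZMod p) - (i : ZMod p)) := by
  have key : (e.choose j : ZMod p) * (Nat.factorial j : ZMod p) = (e.descFactorial j : ZMod p) := by
    rw [Nat.descFactorial_eq_factorial_mul_choose]
    push_cast; ring
  rw [key, Nat.descFactorial_eq_prod_range, Nat.cast_prod]
  rcases le_or_gt j e with h1 | h1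
  · refine Finset.prod_congr rfl fun i hi => ?_
    have : i ≤ e := le_trans (Nat.le_of_lt_succ (Nat.lt_succ_of_lt (Finset.mem_range.1 hi))) h1
    rw [Nat.cast_sub this]
  · rw [Finset.prod_eq_zero (Finset.mem_range.2 h1) (by simp),
      Finset.prod_eq_zero (Finset.mem_range.2 h1) (by simp)]

namespace LW
open Finset

/-- The odd polynomial factor `F(x) = ∏_{i<2n-1} (x + (n-1-i))`. -/
def Ff (p n : ℕ) (x : ZMod p) : ZMod p :=
  ∏ i ∈ range (2*n-1), (x + (((n:ℤ) - 1 - (i:ℤ) : ℤ) : ZMod p))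

/-- `B(x) = ∏_{i<j} (a x² + b x - i)`. -/
def Bf (p : ℕ) (a b : ℤ) (j : ℕ) (x : ZMod p) : ZMod p :=
  ∏ i ∈ range j, ((a : ZMod p) * x^2 + (b : ZMod p) * x - (i : ℕ))

lemma Ff_neg (p n : ℕ) (hn1 : 1 ≤ n) (x : ZMod p) : Ff p n (-x) = - Ff p n x := by
  unfold Ff
  have h1 : ∀ i ∈ range (2*n-1),
      (-x + (((n:ℤ) - 1 - ((2*n-1) - 1 - i : ℕ) : ℤ) : ZMod p))
        = -(x + (((n:ℤ) - 1 - (i:ℤ) : ℤ) : ZMod p)) := by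
    intro i hi
    have hi' : i ≤ 2*n-2 := by have := mem_range.1 hi; omega
    have : (((2*n-1) - 1 - i : ℕ) : ℤ) = 2*(n:ℤ) - 2 - i := by
      push_cast [Nat.cast_sub] <;> omega
    rw [this]
    have : ((n:ℤ) - 1 - (2*(n:ℤ) - 2 - i) : ℤ) = -((n:ℤ) - 1 - i) := by ring
    rw [this]
    push_cast
    ring
  calc ∏ i ∈ range (2*n-1), (-x + (((n:ℤ) - 1 - (i:ℤ) : ℤ) : ZMod p))
      = ∏ i ∈ range (2*n-1), (-x + (((n:ℤ) - 1 - ((2*n-1) - 1 - i : ℕ) : ℤ) : ZMod p)) := by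
        exact (Finset.prod_range_reflect (fun i => (-x + (((n:ℤ) - 1 - (i:ℤ) : ℤ) : ZMod p))) (2*n-1)).symm
    _ = ∏ i ∈ range (2*n-1), -(x + (((n:ℤ) - 1 - (i:ℤ) : ℤ) : ZMod p)) := Finset.prod_congr rfl h1
    _ = ∏ i ∈ range (2*n-1), (-1 : ZMod p) * (x + (((n:ℤ) - 1 - (i:ℤ) : ℤ) : ZMod p)) :=
        Finset.prod_congr rfl (fun i _ => (neg_one_mul _).symm)
    _ = (-1)^(2*n-1) * ∏ i ∈ range (2*n-1), (x + (((n:ℤ) - 1 - (i:ℤ) : ℤ) : ZMod p)) := by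
        rw [Finset.prod_mul_distrib, Finset.prod_const, Finset.card_range]
    _ = - Ff p n x := by
        have : Odd (2*n-1) := ⟨n-1, by omega⟩
        rw [this.neg_one_pow]; unfold Ff; ring

lemma Ff_zero (p n k : ℕ) (hn1 : 1 ≤ n) (hk : k < n) : Ff p n (k : ZMod p) = 0 := by
  unfold Ff
  apply Finset.prod_eq_zero (Finset.mem_range.2 (show k + n - 1 < 2*n-1 by omega))
  have : ((n:ℤ) - 1 - ((k + n - 1 : ℕ) : ℤ) : ℤ) = -(k:ℤ) := by
    have : ((k + n - 1 : ℕ) : ℤ) = (k:ℤ) + n - 1 := by push_cast [Nat.cast_sub (by omega : 1 ≤ k + n)]; ring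
    rw [this]; ring
  rw [this]
  push_cast
  ring

end LW

namespace LW
open Finset

lemma toNat_mod_cast (p : ℕ) [NeZero p] (t : ℤ) :
    (((t % (p:ℤ)).toNat : ℕ) : ZMod p) = (t : ZMod p) := by
  have hp : (0:ℤ) < p := by
    have := Nat.pos_of_ne_zero (NeZero.ne p); exact_mod_cast this
  have h1 : ((t % (p:ℤ)).toNat : ℤ) = t % p := Int.toNat_of_nonneg (Int.emod_nonneg t hp.ne')
  have : (((t % (p:ℤ)).toNat : ℕ) : ZMod p) = (((t % (p:ℤ)).toNat : ℤ) : ZMod p) := by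
    push_cast; ring
  rw [this, h1, ZMod.intCast_mod]

lemma choose_toNat_cast (p : ℕ) [NeZero p] (t : ℤ) (j : ℕ) :
    ((((t % (p:ℤ)).toNat).choose j : ZMod p)) * (Nat.factorial j : ZMod p) =
      ∏ i ∈ range j, ((t : ZMod p) - (i : ℕ)) := by
  rw [choose_cast_eq p _ j, toNat_mod_cast p t]

end LW

namespace LW
open Finset

lemma key_zmod (p : ℕ) [Fact p.Prime] (hodd : Odd p) (m g : ℤ) (n j : ℕ)
    (hn1 : 1 ≤ n) (hn2 : n ≤ (p-1)/2) (hj : j ≤ (p-1)/2 - n) :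
    ∑ k ∈ Icc n ((p-1)/2),
      ((((g*(k:ℤ)^2 - m*(k:ℤ)) % (p:ℤ)).toNat.choose j : ZMod p)
        - (((g*(k:ℤ)^2 + m*(k:ℤ)) % (p:ℤ)).toNat.choose j : ZMod p))
        * ((k+n-1).choose (k-n) : ZMod p) = 0 := by
  have hp : p.Prime := Fact.out
  haveI : NeZero p := ⟨hp.ne_zero⟩
  set M := (p-1)/2 with hM
  have hpM : p = 2*M+1 := by
    have h2 := hp.two_le
    rcases hodd with ⟨t, ht⟩
    omega
  set h : ZMod p → ZMod p := fun x =>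
    (Bf p g (-m) j x - Bf p g m j x) * Ff p n x with hh
  -- evenness
  have heven : ∀ x : ZMod p, h (-x) = h x := by
    intro x
    have hB : ∀ (b : ℤ), Bf p g b j (-x) = Bf p g (-b) j x := by
      intro b; unfold Bf
      refine Finset.prod_congr rfl fun i _ => ?_
      push_cast; ring
    rw [hh]; simp only
    rw [hB, hB, Ff_neg p n hn1 x, show -(-m) = m from by ring]
    ring
  -- h vanishes at small arguments
  have hsmall : ∀ k : ℕ, k < n → h (k : ZMod p) = 0 := by
    intro k hk
    rw [hh]; simp only
    rw [Ff_zero p n k hn1 hk, mul_zero]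
  -- key pointwise identity on Icc n M
  have hpoint : ∀ k ∈ Icc n M,
      ((((g*(k:ℤ)^2 - m*(k:ℤ)) % (p:ℤ)).toNat.choose j : ZMod p)
        - (((g*(k:ℤ)^2 + m*(k:ℤ)) % (p:ℤ)).toNat.choose j : ZMod p))
        * ((k+n-1).choose (k-n) : ZMod p)
        * ((Nat.factorial j : ZMod p) * (Nat.factorial (2*n-1) : ZMod p))
      = h (k : ZMod p) := by
    intro k hk
    have hkn : n ≤ k := (Finset.mem_Icc.1 hk).1
    have e1 : ((((g*(k:ℤ)^2 - m*(k:ℤ)) % (p:ℤ)).toNat.choose j : ZMod p))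
        * (Nat.factorial j : ZMod p) = Bf p g (-m) j (k : ZMod p) := by
      rw [choose_toNat_cast p _ j]
      unfold Bf
      refine Finset.prod_congr rfl fun i _ => ?_
      push_cast; ring
    have e2 : ((((g*(k:ℤ)^2 + m*(k:ℤ)) % (p:ℤ)).toNat.choose j : ZMod p))
        * (Nat.factorial j : ZMod p) = Bf p g m j (k : ZMod p) := by
      rw [choose_toNat_cast p _ j]
      unfold Bf
      refine Finset.prod_congr rfl fun i _ => ?_
      push_cast; ring
    have e3 : ((k+n-1).choose (k-n) : ZMod p) * (Nat.factorial (2*n-1) : ZMod p)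
        = Ff p n (k : ZMod p) := by
      have hsymm : (k+n-1).choose (k-n) = (k+n-1).choose (2*n-1) := by
        rw [show k-n = (k+n-1) - (2*n-1) from by omega]
        exact Nat.choose_symm (by omega)
      rw [hsymm, choose_cast_eq p (k+n-1) (2*n-1)]
      unfold Ff
      refine Finset.prod_congr rfl fun i _ => ?_
      have hcast : ((k+n-1 : ℕ) : ZMod p) = (k : ZMod p) + (n : ZMod p) - 1 := by
        have : ((k+n-1 : ℕ) : ℤ) = (k:ℤ) + (n:ℤ) - 1 := by omega
        have h' : ((k+n-1 : ℕ) : ZMod p) = (((k+n-1 : ℕ) : ℤ) : ZMod p) := by push_cast; ring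
        rw [h', this]; push_cast; ring
      rw [hcast]
      push_cast; ring
    calc _ = (((((g*(k:ℤ)^2 - m*(k:ℤ)) % (p:ℤ)).toNat.choose j : ZMod p))
              * (Nat.factorial j : ZMod p)
            - ((((g*(k:ℤ)^2 + m*(k:ℤ)) % (p:ℤ)).toNat.choose j : ZMod p))
              * (Nat.factorial j : ZMod p))
            * (((k+n-1).choose (k-n) : ZMod p) * (Nat.factorial (2*n-1) : ZMod p)) := by ring
      _ = h (k : ZMod p) := by rw [e1, e2, e3, hh]
  -- polynomial: the full sum over ZMod p of h vanishes
  have hpoly : ∑ x : ZMod p, h x = 0 := by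
    classical
    set P : Polynomial (ZMod p) :=
      ((∏ i ∈ range j, (Polynomial.C (g : ZMod p) * Polynomial.X^2
          + Polynomial.C ((-m : ℤ) : ZMod p) * Polynomial.X - Polynomial.C ((i:ℕ) : ZMod p)))
       - (∏ i ∈ range j, (Polynomial.C (g : ZMod p) * Polynomial.X^2
          + Polynomial.C ((m : ℤ) : ZMod p) * Polynomial.X - Polynomial.C ((i:ℕ) : ZMod p))))
      * ∏ i ∈ range (2*n-1),
          (Polynomial.X + Polynomial.C ((((n:ℤ) - 1 - (i:ℤ)) : ℤ) : ZMod p)) with hP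
    have heval : ∀ x, P.eval x = h x := by
      intro x
      rw [hP, hh]; simp only
      unfold Bf Ff
      simp [Polynomial.eval_prod]
    have hfac2 : ∀ (b : ℤ), (∏ i ∈ range j, (Polynomial.C (g : ZMod p) * Polynomial.X^2
          + Polynomial.C ((b : ℤ) : ZMod p) * Polynomial.X
          - Polynomial.C ((i:ℕ) : ZMod p))).natDegree ≤ 2*j := by
      intro b
      refine le_trans (Polynomial.natDegree_prod_le _ _) ?_
      refine le_trans (Finset.sum_le_sum (g := fun _ => 2) (fun i _ => ?_)) ?_
      · refine le_trans (Polynomial.natDegree_sub_le _ _) (max_le ?_ ?_)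
        · refine le_trans (Polynomial.natDegree_add_le _ _) (max_le ?_ ?_)
          · exact le_trans (Polynomial.natDegree_C_mul_le _ _) (by simp)
          · exact le_trans (Polynomial.natDegree_C_mul_le _ _) (by simp [Polynomial.natDegree_X_le])
        · simp
      · rw [Finset.sum_const, card_range, smul_eq_mul]; omega
    have hdeg : P.natDegree ≤ p - 2 := by
      refine le_trans (Polynomial.natDegree_mul_le) ?_
      have hbr : ((∏ i ∈ range j, (Polynomial.C (g : ZMod p) * Polynomial.X^2
          + Polynomial.C ((-m : ℤ) : ZMod p) * Polynomial.X - Polynomial.C ((i:ℕ) : ZMod p)))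
       - (∏ i ∈ range j, (Polynomial.C (g : ZMod p) * Polynomial.X^2
          + Polynomial.C ((m : ℤ) : ZMod p) * Polynomial.X
          - Polynomial.C ((i:ℕ) : ZMod p)))).natDegree ≤ 2*j :=
        le_trans (Polynomial.natDegree_sub_le _ _) (max_le (hfac2 (-m)) (hfac2 m))
      have hF : (∏ i ∈ range (2*n-1),
          (Polynomial.X + Polynomial.C ((((n:ℤ) - 1 - (i:ℤ)) : ℤ) : ZMod p))).natDegree
          ≤ 2*n-1 := by
        refine le_trans (Polynomial.natDegree_prod_le _ _) ?_
        refine le_trans (Finset.sum_le_sum (g := fun _ => 1) (fun i _ => ?_)) ?_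
        · exact le_trans (Polynomial.natDegree_add_le _ _)
            (max_le Polynomial.natDegree_X_le (by rw [Polynomial.natDegree_C]; omega))
        · rw [Finset.sum_const, card_range, smul_eq_mul]; omega
      have := add_le_add hbr hF
      omega
    rw [← Finset.sum_congr rfl (fun x _ => heval x)]
    exact sum_eval_zero P hdeg
  -- the full sum equals twice the half sum
  have ha : ∑ x : ZMod p, h x = ∑ k ∈ range p, h (k : ZMod p) := by
    refine Finset.sum_nbij' (fun x : ZMod p => x.val) (fun k : ℕ => (k : ZMod p))
      ?_ ?_ ?_ ?_ ?_
    · intro x _; exact Finset.mem_range.2 (ZMod.val_lt x)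
    · intro k _; exact Finset.mem_univ _
    · intro x _; simp [ZMod.natCast_val, ZMod.cast_id]
    · intro k hk; exact ZMod.val_cast_of_lt (Finset.mem_range.1 hk)
    · intro x _; simp [ZMod.natCast_val, ZMod.cast_id]
  have hc : ∑ k ∈ Ico (M+1) p, h (k : ZMod p) = ∑ k ∈ Ico 1 (M+1), h (k : ZMod p) := by
    refine Finset.sum_nbij' (fun k : ℕ => p - k) (fun k : ℕ => p - k) ?_ ?_ ?_ ?_ ?_
    · intro k hk; simp only [Finset.mem_Ico] at hk ⊢; omega
    · intro k hk; simp only [Finset.mem_Ico] at hk ⊢; omega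
    · intro k hk; simp only [Finset.mem_Ico] at hk ⊢; omega
    · intro k hk; simp only [Finset.mem_Ico] at hk ⊢; omega
    · intro k hk
      rw [Finset.mem_Ico] at hk
      have hcast : ((p - k : ℕ) : ZMod p) = -(k : ZMod p) := by
        rw [Nat.cast_sub (by omega : k ≤ p)]
        simp
      rw [hcast, heven]
  have hb : ∑ k ∈ range p, h (k : ZMod p)
      = ∑ k ∈ Ico 0 (M+1), h (k : ZMod p) + ∑ k ∈ Ico (M+1) p, h (k : ZMod p) := by
    rw [Finset.range_eq_Ico, Finset.sum_Ico_consecutive _ (Nat.zero_le _) (by omega)]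
  have hzero : h ((0:ℕ) : ZMod p) = 0 := hsmall 0 hn1
  have hd : ∑ k ∈ Ico 0 (M+1), h (k : ZMod p)
      = h ((0:ℕ) : ZMod p) + ∑ k ∈ Ico 1 (M+1), h (k : ZMod p) := by
    rw [← Finset.sum_Ico_consecutive _ (Nat.zero_le 1) (by omega : 1 ≤ M+1)]
    congr 1
    rw [show Ico 0 1 = range 1 from by rw [Finset.range_eq_Ico]]
    simp
  -- half sum vanishes
  have hhalf : ∑ k ∈ Ico 1 (M+1), h (k : ZMod p) = 0 := by
    have h2ne : (2 : ZMod p) ≠ 0 := by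
      have : ((2:ℕ) : ZMod p) ≠ 0 := by
        rw [Ne, ZMod.natCast_eq_zero_iff]
        intro hd2
        have := Nat.le_of_dvd (by norm_num) hd2
        omega
      simpa using this
    have : (2 : ZMod p) * ∑ k ∈ Ico 1 (M+1), h (k : ZMod p) = 0 := by
      have := hpoly
      rw [ha, hb, hc, hd, hzero, zero_add] at this
      rw [two_mul]
      exact this
    rcases mul_eq_zero.1 this with h' | h'
    · exact absurd h' h2ne
    · exact h'
  -- restrict to Icc n M
  have hrestrict : ∑ k ∈ Icc n M, h (k : ZMod p) = 0 := by
    have : ∑ k ∈ Ico 1 (M+1), h (k : ZMod p)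
        = ∑ k ∈ Ico 1 n, h (k : ZMod p) + ∑ k ∈ Ico n (M+1), h (k : ZMod p) := by
      rw [Finset.sum_Ico_consecutive _ (by omega : 1 ≤ n) (by omega : n ≤ M+1)]
    have hIco : ∑ k ∈ Ico 1 n, h (k : ZMod p) = 0 :=
      Finset.sum_eq_zero fun k hk => hsmall k (Finset.mem_Ico.1 hk).2
    rw [this, hIco, zero_add] at hhalf
    rw [← Finset.Ico_add_one_right_eq_Icc]
    exact hhalf
  -- conclude
  have hfacne : ((Nat.factorial j : ZMod p) * (Nat.factorial (2*n-1) : ZMod p)) ≠ 0 := by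
    have hjlt : j < p := by omega
    have hnlt : 2*n-1 < p := by omega
    refine mul_ne_zero ?_ ?_
    · rw [Ne, ZMod.natCast_eq_zero_iff]
      intro hd2
      exact absurd ((Nat.Prime.dvd_factorial hp).1 hd2) (not_le.2 hjlt)
    · rw [Ne, ZMod.natCast_eq_zero_iff]
      intro hd2
      exact absurd ((Nat.Prime.dvd_factorial hp).1 hd2) (not_le.2 hnlt)
  have hfinal : (∑ k ∈ Icc n M,
      ((((g*(k:ℤ)^2 - m*(k:ℤ)) % (p:ℤ)).toNat.choose j : ZMod p)
        - (((g*(k:ℤ)^2 + m*(k:ℤ)) % (p:ℤ)).toNat.choose j : ZMod p))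
        * ((k+n-1).choose (k-n) : ZMod p))
      * ((Nat.factorial j : ZMod p) * (Nat.factorial (2*n-1) : ZMod p)) = 0 := by
    rw [Finset.sum_mul]
    rw [Finset.sum_congr rfl hpoint]
    exact hrestrict
  rcases mul_eq_zero.1 hfinal with h' | h'
  · exact h'
  · exact absurd h' hfacne

/-- binomial expansion of `x^E` in powers of `x - 1`, padded to `range p`. -/
lemma expand_pow {R : Type*} [CommRing R] (x : R) (E P : ℕ) (hE : E < P) :
    x ^ E = ∑ j ∈ range P, (E.choose j : R) * (x - 1)^j := by
  have h1 : x ^ E = ((x - 1) + 1) ^ E := by ring_nf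
  rw [h1, add_pow]
  simp only [one_pow, mul_one]
  rw [← Finset.sum_subset (Finset.range_subset_range.2 (by omega : E + 1 ≤ P))
    (fun j _ hj => by
      rw [Nat.choose_eq_zero_of_lt (by simpa using (Finset.mem_range.not.1 hj) : E < j)]
      simp)]
  exact Finset.sum_congr rfl fun j _ => by ring

/-- `(x-1)^(p-1)` divides `p` whenever `x^p = 1` via the geometric sum. -/
lemma pow_sub_one_dvd_p {R : Type*} [CommRing R] (p : ℕ) (hp : p.Prime) (x : R)
    (hgeom : (∑ i ∈ range p, x ^ i) = 0) :
    (x - 1) ^ (p - 1) ∣ (p : R) := by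
  have h2 := hp.two_le
  -- identity: 0 = ∑_{j<p} C(p, j+1) (x-1)^j
  have hid : (0 : R) = ∑ j ∈ range p, ((p.choose (j+1) : ℕ) : R) * (x - 1)^j := by
    rw [← hgeom]
    calc ∑ i ∈ range p, x ^ i
        = ∑ i ∈ range p, ∑ j ∈ range p, (i.choose j : R) * (x - 1)^j :=
          Finset.sum_congr rfl fun i hi => expand_pow x i p (Finset.mem_range.1 hi)
      _ = ∑ j ∈ range p, ∑ i ∈ range p, (i.choose j : R) * (x - 1)^j := Finset.sum_comm
      _ = ∑ j ∈ range p, ((p.choose (j+1) : ℕ) : R) * (x - 1)^j := by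
          refine Finset.sum_congr rfl fun j hjmem => ?_
          rw [← Finset.sum_mul]
          congr 1
          rw [← Nat.cast_sum]
          congr 1
          -- hockey stick
          have : ∑ i ∈ range p, i.choose j = ∑ i ∈ Icc j (p-1), i.choose j := by
            rw [← Finset.Ico_add_one_right_eq_Icc, show p-1+1 = p from by omega, Finset.range_eq_Ico]
            rw [← Finset.sum_Ico_consecutive _ (Nat.zero_le j)
              (le_of_lt (Finset.mem_range.1 hjmem))]
            have : ∑ i ∈ Ico 0 j, i.choose j = 0 :=
              Finset.sum_eq_zero fun i hi =>
                Nat.choose_eq_zero_of_lt (Finset.mem_Ico.1 hi).2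
            rw [this, zero_add]
          rw [this, Nat.sum_Icc_choose, show p - 1 + 1 = p from by omega]
  -- split off j = 0 and j = p-1
  have hsplit : (0 : R) = (p : R) +
      (∑ j ∈ Ico 1 (p-1), ((p.choose (j+1) : ℕ) : R) * (x - 1)^j + (x-1)^(p-1)) := by
    rw [hid, Finset.range_eq_Ico,
      ← Finset.sum_Ico_consecutive _ (Nat.zero_le 1) (by omega : 1 ≤ p),
      ← Finset.sum_Ico_consecutive _ (by omega : 1 ≤ p - 1) (by omega : p - 1 ≤ p)]
    congr 1
    · rw [show Ico 0 1 = range 1 from by rw [Finset.range_eq_Ico]]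
      simp
    · congr 1
      rw [show Ico (p-1) p = {p-1} from by
        have := Nat.Ico_succ_singleton (p-1)
        rwa [show p-1+1 = p from by omega] at this]
      rw [Finset.sum_singleton, show p - 1 + 1 = p from by omega, Nat.choose_self]
      simp
  -- now induction
  have main : ∀ a : ℕ, a ≤ p - 1 → (x - 1) ^ a ∣ (p : R) := by
    intro a
    induction a with
    | zero => intro _; simpa using dvd_refl _
    | succ a ih =>
      intro ha
      have hdvd : (x - 1) ^ (a+1) ∣
          ∑ j ∈ Ico 1 (p-1), ((p.choose (j+1) : ℕ) : R) * (x - 1)^j + (x-1)^(p-1) := by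
        refine dvd_add (Finset.dvd_sum fun j hj => ?_) (pow_dvd_pow _ (by omega))
        have hj1 := (Finset.mem_Ico.1 hj).1
        have hj2 := (Finset.mem_Ico.1 hj).2
        obtain ⟨b, hb⟩ := hp.dvd_choose_self (by omega : j + 1 ≠ 0) (by omega : j + 1 < p)
        obtain ⟨c, hc⟩ := ih (by omega)
        obtain ⟨d, hd⟩ : ∃ d, j = d + 1 := ⟨j - 1, by omega⟩
        subst hd
        refine ⟨c * (b:R) * (x-1)^d, ?_⟩
        rw [hb]
        push_cast
        rw [hc]
        ring
      have : (p : R) = -(∑ j ∈ Ico 1 (p-1), ((p.choose (j+1) : ℕ) : R) * (x - 1)^j + (x-1)^(p-1)) := by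
        rw [eq_neg_iff_add_eq_zero]
        rw [eq_comm] at hsplit
        exact hsplit
      rw [this]
      exact hdvd.neg_right
  exact main (p-1) le_rfl

lemma key {R : Type*} [CommRing R] (p : ℕ) (hp : p.Prime) (hodd : Odd p)
    (x : R) (hgeom : (∑ i ∈ range p, x ^ i) = 0)
    (m g : ℤ) (n : ℕ) (hn1 : 1 ≤ n) (hn2 : n ≤ (p-1)/2) :
    (x - 1) ^ ((p-1)/2 - n + 1) ∣
      ∑ k ∈ Icc n ((p-1)/2),
        (x ^ ((g*(k:ℤ)^2 - m*(k:ℤ)) % (p:ℤ)).toNat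
          - x ^ ((g*(k:ℤ)^2 + m*(k:ℤ)) % (p:ℤ)).toNat)
          * ((k+n-1).choose (k-n) : R) := by
  haveI : Fact p.Prime := ⟨hp⟩
  have h2 := hp.two_le
  set M := (p-1)/2 with hM
  set N := M - n + 1 with hN
  have hpM : p = 2*M+1 := by rcases hodd with ⟨t,ht⟩; omega
  have hppos : (0:ℤ) < (p:ℤ) := by exact_mod_cast (by omega : 0 < p)
  have hElt : ∀ t : ℤ, (t % (p:ℤ)).toNat < p := by
    intro t
    have h1 := Int.emod_lt_of_pos t hppos
    have h0 := Int.emod_nonneg t hppos.ne'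
    omega
  have hterm : ∀ k ∈ Icc n M,
      (x ^ ((g*(k:ℤ)^2 - m*(k:ℤ)) % (p:ℤ)).toNat
        - x ^ ((g*(k:ℤ)^2 + m*(k:ℤ)) % (p:ℤ)).toNat) * ((k+n-1).choose (k-n) : R)
      = ∑ j ∈ range p,
          (((((g*(k:ℤ)^2 - m*(k:ℤ)) % (p:ℤ)).toNat.choose j : ℕ) : R)
            - ((((g*(k:ℤ)^2 + m*(k:ℤ)) % (p:ℤ)).toNat.choose j : ℕ) : R))
          * ((k+n-1).choose (k-n) : R) * (x-1)^j := by
    intro k _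
    rw [expand_pow x _ p (hElt _), expand_pow x _ p (hElt _), ← Finset.sum_sub_distrib,
      Finset.sum_mul]
    exact Finset.sum_congr rfl fun j _ => by ring
  rw [Finset.sum_congr rfl hterm, Finset.sum_comm]
  refine Finset.dvd_sum fun j hj => ?_
  rw [← Finset.sum_mul]
  rcases le_or_gt N j with hNj | hNj
  · exact Dvd.dvd.mul_left (pow_dvd_pow _ hNj) _
  · rcases Nat.eq_zero_or_pos j with hj0 | hj1
    · subst hj0
      have : ∀ k ∈ Icc n M,
          (((((g*(k:ℤ)^2 - m*(k:ℤ)) % (p:ℤ)).toNat.choose 0 : ℕ) : R)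
            - ((((g*(k:ℤ)^2 + m*(k:ℤ)) % (p:ℤ)).toNat.choose 0 : ℕ) : R))
          * ((k+n-1).choose (k-n) : R) = 0 := by
        intro k _
        simp
      rw [Finset.sum_congr rfl this]
      simp
    · -- 1 ≤ j < N, use key_zmod
      set Tz : ℤ := ∑ k ∈ Icc n M,
        (((((g*(k:ℤ)^2 - m*(k:ℤ)) % (p:ℤ)).toNat.choose j : ℕ) : ℤ)
          - ((((g*(k:ℤ)^2 + m*(k:ℤ)) % (p:ℤ)).toNat.choose j : ℕ) : ℤ))
        * (((k+n-1).choose (k-n) : ℕ) : ℤ) with hTz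
      have hcastR : ∑ k ∈ Icc n M,
          (((((g*(k:ℤ)^2 - m*(k:ℤ)) % (p:ℤ)).toNat.choose j : ℕ) : R)
            - ((((g*(k:ℤ)^2 + m*(k:ℤ)) % (p:ℤ)).toNat.choose j : ℕ) : R))
          * ((k+n-1).choose (k-n) : R) = ((Tz : ℤ) : R) := by
        rw [hTz]
        push_cast
        ring
      have hdvdT : (p:ℤ) ∣ Tz := by
        rw [← ZMod.intCast_zmod_eq_zero_iff_dvd]
        have hz := key_zmod p hodd m g n j hn1 hn2 (by omega : j ≤ (p-1)/2 - n)
        rw [hTz]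
        push_cast
        exact hz
      obtain ⟨u, hu⟩ := hdvdT
      have hpd : (x - 1) ^ (p - 1) ∣ (p : R) := pow_sub_one_dvd_p p hp x hgeom
      have : (x-1)^N ∣ ((Tz : ℤ) : R) := by
        refine dvd_trans (dvd_trans (pow_dvd_pow _ (by omega : N ≤ p - 1)) hpd) ?_
        rw [hu]
        push_cast
        exact Dvd.intro _ rfl
      rw [hcastR]
      exact this.mul_right _

end LW

/-- The key divisibility (Lin–Wang type lemma): for `m` coprime to `p`, any `g`, and
`1 ≤ n ≤ (p-1)/2`, the sum `Σ_{k=n}^{(p-1)/2} (ξ^{-mk} - ξ^{mk}) ξ^{gk²} C(k+n-1,k-n)`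
is divisible by `(ξ-1)^{(p-1)/2-n+1}` in `ℤ[ξ]`. -/
theorem lin_wang_divisibility (p : ℕ) (hp : p.Prime) (hodd : Odd p)
    (ξ : ℂ) (hξ : ξ = Complex.exp (2 * Real.pi * Complex.I / p))
    (m : ℤ) (hm : Int.gcd m p = 1) (g : ℤ)
    (n : ℕ) (hn1 : 1 ≤ n) (hn2 : n ≤ (p - 1) / 2) :
    ∃ c ∈ Subring.closure {ξ},
      (∑ k ∈ Finset.Icc n ((p - 1) / 2),
        (ξ ^ (-(m * k)) - ξ ^ (m * k)) * ξ ^ (g * (k : ℤ) ^ 2) *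
          (Nat.choose (k + n - 1) (k - n) : ℂ))
        = (ξ - 1) ^ ((p - 1) / 2 - n + 1) * c := by
  have h2 := hp.two_le
  have hprim : IsPrimitiveRoot ξ p := by
    rw [hξ]; exact Complex.isPrimitiveRoot_exp p hp.ne_zero
  have hξp : ξ ^ p = 1 := hprim.pow_eq_one
  have hξ1 : ξ ≠ 1 := hprim.ne_one hp.one_lt
  have hξ0 : ξ ≠ 0 := by
    intro h
    rw [h, zero_pow hp.ne_zero] at hξp
    exact zero_ne_one hξp
  have hgeomC : ∑ i ∈ Finset.range p, ξ ^ i = 0 := by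
    have hgm := geom_sum_mul ξ p
    rw [hξp, sub_self] at hgm
    rcases mul_eq_zero.1 hgm with h' | h'
    · exact h'
    · exact absurd h' (sub_ne_zero.2 hξ1)
  have hppos : (0:ℤ) < (p:ℤ) := by exact_mod_cast (by omega : 0 < p)
  have hzpow : ∀ t : ℤ, ξ ^ t = ξ ^ ((t % (p:ℤ)).toNat) := by
    intro t
    have h0 := Int.emod_nonneg t hppos.ne'
    have h1 : ((t % (p:ℤ)).toNat : ℤ) = t % p := Int.toNat_of_nonneg h0
    calc ξ ^ t = ξ ^ ((p:ℤ) * (t / (p:ℤ)) + ((t % (p:ℤ)).toNat : ℤ)) := by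
          rw [h1, Int.mul_ediv_add_emod]
      _ = (ξ ^ (p:ℤ)) ^ (t / (p:ℤ)) * ξ ^ (((t % (p:ℤ)).toNat : ℤ)) := by
          rw [zpow_add₀ hξ0, zpow_mul]
      _ = ξ ^ ((t % (p:ℤ)).toNat) := by
          rw [zpow_natCast, hξp, one_zpow, one_mul, zpow_natCast]
  have hterm : ∀ k : ℕ, (ξ ^ (-(m * (k:ℤ))) - ξ ^ (m * (k:ℤ))) * ξ ^ (g * (k:ℤ)^2)
      = ξ ^ ((g*(k:ℤ)^2 - m*(k:ℤ)) % (p:ℤ)).toNat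
        - ξ ^ ((g*(k:ℤ)^2 + m*(k:ℤ)) % (p:ℤ)).toNat := by
    intro k
    rw [sub_mul, ← zpow_add₀ hξ0, ← zpow_add₀ hξ0,
      show -(m * (k:ℤ)) + g * (k:ℤ)^2 = g*(k:ℤ)^2 - m*(k:ℤ) from by ring,
      show m * (k:ℤ) + g * (k:ℤ)^2 = g*(k:ℤ)^2 + m*(k:ℤ) from by ring,
      hzpow _, hzpow _]
  set R := Subring.closure {ξ} with hR
  have hmem : ξ ∈ R := Subring.subset_closure (Set.mem_singleton ξ)
  set x : R := ⟨ξ, hmem⟩ with hx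
  have hgeomR : (∑ i ∈ Finset.range p, x ^ i) = 0 := by
    apply Subtype.ext
    push_cast
    exact hgeomC
  obtain ⟨c, hc⟩ := LW.key p hp hodd x hgeomR m g n hn1 hn2
  refine ⟨(c : ℂ), c.2, ?_⟩
  have hcoe := congrArg (fun y : R => (y : ℂ)) hc
  push_cast at hcoe
  calc ∑ k ∈ Finset.Icc n ((p - 1) / 2),
        (ξ ^ (-(m * k)) - ξ ^ (m * k)) * ξ ^ (g * (k : ℤ) ^ 2) *
          (Nat.choose (k + n - 1) (k - n) : ℂ)
      = ∑ k ∈ Finset.Icc n ((p - 1) / 2),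
          (ξ ^ ((g*(k:ℤ)^2 - m*(k:ℤ)) % (p:ℤ)).toNat
            - ξ ^ ((g*(k:ℤ)^2 + m*(k:ℤ)) % (p:ℤ)).toNat) *
          (Nat.choose (k + n - 1) (k - n) : ℂ) := by
        refine Finset.sum_congr rfl fun k _ => ?_
        rw [hterm k]
    _ = (ξ - 1) ^ ((p - 1) / 2 - n + 1) * (c : ℂ) := hcoe
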